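/- Let $s\in(1/2,1)$ and let $b:(0,\infty)\to(1/2,1)$ and $q:(0,\infty)\to(0,\infty)$ be functions with $\lim_{\alpha\to\infty} b(\alpha) = s$ and $\lim_{\alpha\to\infty} q(\alpha) = 0$. Then $\lim_{\alpha\to\infty}\, q(\alpha)^{2-2b(\alpha)}\, K_{b(\alpha)}(q(\alpha)) = \Gamma(2-2s)$, where $\Gamma$ is the Gamma function. -/

import Mathlib

open Filter MeasureTheory Set Real

/-- `K b q = ∑_{l=1}^∞ e^{-lq} l^{1-2b}`. -/
noncomputable def K (b q : ℝ) : ℝ :=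
  ∑' l : ℕ, Real.exp (-((l : ℝ) + 1) * q) * ((l : ℝ) + 1) ^ (1 - 2 * b)

set_option maxHeartbeats 1000000 in
lemma sandwich (b q : ℝ) (hb1 : 1/2 < b) (hb2 : b < 1) (hq : 0 < q) :
    Real.Gamma (2 - 2*b) - q ^ (2 - 2*b) / (2 - 2*b) ≤ q ^ (2 - 2*b) * K b q ∧
    q ^ (2 - 2*b) * K b q ≤ Real.Gamma (2 - 2*b) := by
  set c : ℝ := 1 - 2*b with hc
  have hc0 : c < 0 := by simp only [hc]; linarith
  have hc1 : (-1 : ℝ) < c := by simp only [hc]; linarith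
  have h2b : (2 : ℝ) - 2*b = c + 1 := by simp only [hc]; ring
  have hcp : (0 : ℝ) < c + 1 := by linarith
  set f : ℝ → ℝ := fun x => Real.exp (-x) * x ^ c with hf
  -- basic facts about f
  have hfnonneg : ∀ x : ℝ, 0 ≤ x → 0 ≤ f x := fun x hx =>
    mul_nonneg (Real.exp_nonneg _) (Real.rpow_nonneg hx _)
  have hanti : ∀ x y : ℝ, 0 < x → x ≤ y → f y ≤ f x := by
    intro x y hx hxy
    exact mul_le_mul (Real.exp_le_exp.2 (by linarith))
      (Real.rpow_le_rpow_of_nonpos hx hxy hc0.le)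
      (Real.rpow_nonneg (by linarith) _) (Real.exp_nonneg _)
  have hint : IntegrableOn f (Ioi 0) := by
    have := Real.GammaIntegral_convergent (s := 2 - 2*b) (by linarith)
    simpa [hf, h2b] using this
  have hGamma : Real.Gamma (2 - 2*b) = ∫ x in Ioi (0:ℝ), f x := by
    rw [Real.Gamma_eq_integral (by linarith)]
    simp [hf, h2b]
  -- the series
  set g : ℕ → ℝ := fun l => q * f (((l:ℝ) + 1) * q) with hg
  have hlq : ∀ l : ℕ, (0:ℝ) < ((l:ℝ) + 1) * q := by
    intro l; positivity
  have hgnonneg : ∀ l, 0 ≤ g l := fun l => mul_nonneg hq.le (hfnonneg _ (hlq l).le)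
  have hgsummable : Summable g := by
    have hbound : Summable (fun l : ℕ => (q * Real.exp (-q) * q ^ c) * Real.exp (-q) ^ l) :=
      (summable_geometric_of_lt_one (Real.exp_nonneg _)
        (Real.exp_lt_one_iff.2 (by linarith))).mul_left _
    refine Summable.of_nonneg_of_le hgnonneg (fun l => ?_) hbound
    ·
      have h1 : (((l:ℝ) + 1) * q) ^ c ≤ q ^ c :=
        Real.rpow_le_rpow_of_nonpos hq (by nlinarith [Nat.cast_nonneg (α := ℝ) l]) hc0.le
      have h2 : Real.exp (-(((l:ℝ) + 1) * q)) = Real.exp (-q) * Real.exp (-q) ^ l := by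
        rw [← Real.exp_nat_mul, ← Real.exp_add]; ring_nf
      simp only [hg, hf]
      calc q * (Real.exp (-(((l:ℝ) + 1) * q)) * (((l:ℝ) + 1) * q) ^ c)
          ≤ q * (Real.exp (-(((l:ℝ) + 1) * q)) * q ^ c) := by
            apply mul_le_mul_of_nonneg_left _ hq.le
            exact mul_le_mul_of_nonneg_left h1 (Real.exp_nonneg _)
        _ = (q * Real.exp (-q) * q ^ c) * Real.exp (-q) ^ l := by rw [h2]; ring
  have hSK : q ^ (2 - 2*b) * K b q = ∑' l : ℕ, g l := by
    rw [K, ← tsum_mul_left]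
    congr 1; funext l
    simp only [hg, hf]
    rw [Real.mul_rpow (by positivity) hq.le, h2b, Real.rpow_add hq, Real.rpow_one]
    rw [← hc]; ring
  -- interval integrability
  have hIoc_int : ∀ u v : ℝ, 0 ≤ u → IntegrableOn f (Ioc u v) := by
    intro u v hu
    exact hint.mono_set (fun x hx => lt_of_le_of_lt hu hx.1)
  have hII : ∀ u v : ℝ, 0 ≤ u → u ≤ v → IntervalIntegrable f volume u v := by
    intro u v hu huv
    rw [intervalIntegrable_iff_integrableOn_Ioc_of_le huv]
    exact hIoc_int u v hu
  -- per-interval bounds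
  have hvol : ∀ u v : ℝ, u ≤ v → (volume (Ioc u v)).toReal = v - u := by
    intro u v huv
    rw [Real.volume_Ioc, ENNReal.toReal_ofReal (by linarith)]
  have hlow_int : ∀ u v : ℝ, 0 < u → u ≤ v → (v - u) * f v ≤ ∫ x in Ioc u v, f x := by
    intro u v hu huv
    have : ∫ _x in Ioc u v, f v ≤ ∫ x in Ioc u v, f x := by
      apply setIntegral_mono_on (integrableOn_const (by simp [Real.volume_Ioc]))
        (hIoc_int u v hu.le) measurableSet_Ioc
      intro x hx; exact hanti x v (lt_trans hu hx.1) hx.2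
    rwa [setIntegral_const, measureReal_def, hvol u v huv, smul_eq_mul] at this
  have hup_int : ∀ u v : ℝ, 0 < u → u ≤ v → (∫ x in Ioc u v, f x) ≤ (v - u) * f u := by
    intro u v hu huv
    have : ∫ x in Ioc u v, f x ≤ ∫ _x in Ioc u v, f u := by
      apply setIntegral_mono_on (hIoc_int u v hu.le)
        (integrableOn_const (by simp [Real.volume_Ioc])) measurableSet_Ioc
      intro x hx; exact hanti u x hu hx.1.le
    rwa [setIntegral_const, measureReal_def, hvol u v huv, smul_eq_mul] at this
  constructor
  · -- lower bound
    rw [hSK]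
    -- ∫_{Ioi q} f ≤ tsum g
    have hIoiq_int : IntegrableOn f (Ioi q) := hint.mono_set (Ioi_subset_Ioi hq.le)
    have hpart : ∀ n : ℕ, (∫ x in q..((n:ℝ)+1)*q, f x) ≤ ∑' l, g l := by
      intro n
      have hadj : ∑ k ∈ Finset.range n,
            ∫ x in (((k:ℕ):ℝ)+1)*q..((((k+1:ℕ)):ℝ)+1)*q, f x
          = ∫ x in (((0:ℕ):ℝ)+1)*q..(((n:ℕ):ℝ)+1)*q, f x := by
        apply intervalIntegral.sum_integral_adjacent_intervals
        intro k _
        apply hII (((k:ℝ)+1)*q) (((((k+1:ℕ)):ℝ)+1)*q) (hlq k).le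
        push_cast
        nlinarith [hq.le, Nat.cast_nonneg (α := ℝ) k]
      have hsum : ∑ k ∈ Finset.range n,
            ∫ x in (((k:ℕ):ℝ)+1)*q..((((k+1:ℕ)):ℝ)+1)*q, f x
          ≤ ∑ k ∈ Finset.range n, g k := by
        apply Finset.sum_le_sum
        intro k _
        push_cast
        have h1 : (0:ℝ) < ((k:ℝ)+1)*q := hlq k
        have h2 : ((k:ℝ)+1)*q ≤ ((k:ℝ)+1+1)*q := by nlinarith [hq.le]
        rw [intervalIntegral.integral_of_le h2]
        have hle := hup_int _ _ h1 h2
        calc (∫ x in Ioc (((k:ℝ)+1)*q) (((k:ℝ)+1+1)*q), f x)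
            ≤ (((k:ℝ)+1+1)*q - ((k:ℝ)+1)*q) * f (((k:ℝ)+1)*q) := hle
          _ = g k := by simp only [hg]; ring
      calc (∫ x in q..((n:ℝ)+1)*q, f x)
          = ∑ k ∈ Finset.range n,
              ∫ x in (((k:ℕ):ℝ)+1)*q..((((k+1:ℕ)):ℝ)+1)*q, f x := by
            rw [hadj]; norm_num
        _ ≤ ∑ k ∈ Finset.range n, g k := hsum
        _ ≤ ∑' l, g l := Summable.sum_le_tsum _ (fun i _ => hgnonneg i) hgsummable
    have htend : Tendsto (fun n : ℕ => ∫ x in q..((n:ℝ)+1)*q, f x) atTop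
        (nhds (∫ x in Ioi q, f x)) := by
      apply MeasureTheory.intervalIntegral_tendsto_integral_Ioi q hIoiq_int
      exact Tendsto.atTop_mul_const hq
        (tendsto_atTop_add_const_right _ 1 tendsto_natCast_atTop_atTop)
    have hIoiq_le : (∫ x in Ioi q, f x) ≤ ∑' l, g l := le_of_tendsto htend
      (Eventually.of_forall hpart)
    -- Γ - ∫_{Ioc 0 q} f = ∫_{Ioi q} f
    have hsplit : Real.Gamma (2 - 2*b) = (∫ x in Ioc 0 q, f x) + ∫ x in Ioi q, f x := by
      rw [hGamma, ← setIntegral_union (Ioc_disjoint_Ioi le_rfl) measurableSet_Ioi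
        (hIoc_int 0 q le_rfl) hIoiq_int, Ioc_union_Ioi_eq_Ioi hq.le]
    -- ∫_{Ioc 0 q} f ≤ q^{2-2b}/(2-2b)
    have hrpow_int : IntegrableOn (fun x : ℝ => x ^ c) (Ioc 0 q) := by
      rw [← intervalIntegrable_iff_integrableOn_Ioc_of_le hq.le]
      exact intervalIntegral.intervalIntegrable_rpow' hc1
    have hsmall : (∫ x in Ioc 0 q, f x) ≤ q ^ (2 - 2*b) / (2 - 2*b) := by
      have h1 : (∫ x in Ioc 0 q, f x) ≤ ∫ x in Ioc 0 q, x ^ c := by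
        apply setIntegral_mono_on (hIoc_int 0 q le_rfl) hrpow_int measurableSet_Ioc
        intro x hx
        have : Real.exp (-x) ≤ 1 := Real.exp_le_one_iff.2 (by linarith [hx.1])
        calc f x = Real.exp (-x) * x ^ c := rfl
          _ ≤ 1 * x ^ c := mul_le_mul_of_nonneg_right this (Real.rpow_nonneg hx.1.le _)
          _ = x ^ c := one_mul _
      have h2 : (∫ x in Ioc 0 q, x ^ c) = q ^ (c+1) / (c+1) := by
        rw [← intervalIntegral.integral_of_le hq.le,
          integral_rpow (Or.inl hc1), Real.zero_rpow (by linarith : c + 1 ≠ 0)]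
        ring
      calc (∫ x in Ioc 0 q, f x) ≤ ∫ x in Ioc 0 q, x ^ c := h1
        _ = q ^ (c+1) / (c+1) := h2
        _ = q ^ (2 - 2*b) / (2 - 2*b) := by rw [h2b]
    rw [h2b] at hsplit ⊢
    rw [h2b] at hsmall
    linarith
  · -- upper bound
    rw [hSK, hGamma]
    apply Real.tsum_le_of_sum_range_le hgnonneg
    intro n
    have hadj : ∑ k ∈ Finset.range n, ∫ x in ((k:ℕ):ℝ)*q..(((k+1:ℕ)):ℝ)*q, f x
        = ∫ x in ((0:ℕ):ℝ)*q..((n:ℕ):ℝ)*q, f x := by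
      apply intervalIntegral.sum_integral_adjacent_intervals
      intro k _
      apply hII ((k:ℝ)*q) ((((k+1:ℕ)):ℝ)*q) (by positivity)
      push_cast
      nlinarith [hq.le, Nat.cast_nonneg (α := ℝ) k]
    have hsum : ∑ k ∈ Finset.range n, g k
        ≤ ∑ k ∈ Finset.range n, ∫ x in ((k:ℕ):ℝ)*q..(((k+1:ℕ)):ℝ)*q, f x := by
      apply Finset.sum_le_sum
      intro k _
      push_cast
      have h2 : (k:ℝ)*q ≤ ((k:ℝ)+1)*q := by nlinarith [hq.le, Nat.cast_nonneg (α := ℝ) k]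
      rw [intervalIntegral.integral_of_le h2]
      rcases Nat.eq_zero_or_pos k with hk | hk
      · subst hk
        -- interval Ioc 0 q; need q * f q ≤ ∫
        simp only [Nat.cast_zero, zero_mul, zero_add, one_mul]
        have key : ∀ ε : ℝ, 0 < ε → ε ≤ q → (q - ε) * f q ≤ ∫ x in Ioc 0 q, f x := by
          intro ε hε hεq
          calc (q - ε) * f q ≤ ∫ x in Ioc ε q, f x := hlow_int ε q hε hεq
            _ ≤ ∫ x in Ioc 0 q, f x := by
              apply setIntegral_mono_set (hIoc_int 0 q le_rfl)
                (ae_restrict_of_forall_mem measurableSet_Ioc fun x hx => hfnonneg x hx.1.le)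
              exact Eventually.of_forall (Ioc_subset_Ioc_left hε.le)
        -- take ε → 0
        have hg0 : g 0 = q * f q := by simp [hg]
        rw [hg0]
        have hlim : Tendsto (fun ε : ℝ => (q - ε) * f q) (nhdsWithin 0 (Ioi 0))
            (nhds (q * f q)) := by
          have : Tendsto (fun ε : ℝ => (q - ε) * f q) (nhds 0) (nhds ((q - 0) * f q)) := by
            exact ((tendsto_const_nhds.sub tendsto_id).mul tendsto_const_nhds)
          simpa using this.mono_left nhdsWithin_le_nhds
        apply le_of_tendsto hlim
        filter_upwards [Ioo_mem_nhdsGT_of_mem (Set.left_mem_Ico.2 hq)] with ε hε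
        exact key ε hε.1 hε.2.le
      · have h1 : (0:ℝ) < (k:ℝ)*q := by
          have : (1:ℝ) ≤ (k:ℝ) := by exact_mod_cast hk
          nlinarith
        have step := hlow_int _ _ h1 h2
        have hgk : g k = (((k:ℝ)+1)*q - (k:ℝ)*q) * f (((k:ℝ)+1)*q) := by
          simp only [hg]; ring
        rw [hgk]; exact step
    calc ∑ k ∈ Finset.range n, g k
        ≤ ∑ k ∈ Finset.range n, ∫ x in ((k:ℕ):ℝ)*q..(((k+1:ℕ)):ℝ)*q, f x := hsum
      _ = ∫ x in ((0:ℕ):ℝ)*q..((n:ℕ):ℝ)*q, f x := hadj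
      _ = ∫ x in Ioc 0 ((n:ℝ)*q), f x := by
          rw [show (((0:ℕ):ℝ))*q = 0 by norm_num,
            intervalIntegral.integral_of_le (by positivity)]
      _ ≤ ∫ x in Ioi (0:ℝ), f x := by
          apply setIntegral_mono_set hint
            (ae_restrict_of_forall_mem measurableSet_Ioi fun x hx => hfnonneg x (le_of_lt hx))
          exact Eventually.of_forall Ioc_subset_Ioi_self

theorem limit_q_rpow_mul_K_of_limits (s : ℝ) (hs : s ∈ Ioo (1/2 : ℝ) 1)
    (b q : ℝ → ℝ)
    (hb : ∀ α : ℝ, 0 < α → b α ∈ Ioo (1/2 : ℝ) 1)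
    (hq : ∀ α : ℝ, 0 < α → q α ∈ Ioi (0 : ℝ))
    (hbs : Tendsto b atTop (nhds s))
    (hq0 : Tendsto q atTop (nhds 0)) :
    Tendsto (fun α : ℝ => q α ^ (2 - 2 * b α) * K (b α) (q α)) atTop
      (nhds (Real.Gamma (2 - 2 * s))) := by
  have hs1 : (0:ℝ) < 2 - 2*s := by linarith [hs.2]
  have hbt : Tendsto (fun α => 2 - 2 * b α) atTop (nhds (2 - 2*s)) :=
    tendsto_const_nhds.sub (hbs.const_mul 2)
  have hGcont : ContinuousAt Real.Gamma (2 - 2*s) := by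
    apply (Real.differentiableAt_Gamma ?_).continuousAt
    intro m hEq
    have : (0:ℝ) ≤ (m:ℝ) := Nat.cast_nonneg m
    rw [eq_comm] at hEq
    have : -(m:ℝ) ≤ 0 := by linarith
    linarith [hEq ▸ hs1]
  have hupper : Tendsto (fun α => Real.Gamma (2 - 2 * b α)) atTop
      (nhds (Real.Gamma (2 - 2*s))) := (hGcont.tendsto).comp hbt
  have hrpow : Tendsto (fun α => q α ^ (2 - 2 * b α)) atTop (nhds 0) := by
    have h := Filter.Tendsto.rpow hq0 hbt (Or.inr hs1)
    simpa [Real.zero_rpow hs1.ne'] using h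
  have hlower : Tendsto (fun α => Real.Gamma (2 - 2 * b α) - q α ^ (2 - 2 * b α) / (2 - 2 * b α))
      atTop (nhds (Real.Gamma (2 - 2*s))) := by
    have h := hupper.sub (hrpow.div hbt hs1.ne')
    simpa using h
  apply tendsto_of_tendsto_of_tendsto_of_le_of_le' hlower hupper
  · filter_upwards [eventually_gt_atTop (0:ℝ)] with α hα
    exact (sandwich (b α) (q α) (hb α hα).1 (hb α hα).2 (hq α hα)).1
  · filter_upwards [eventually_gt_atTop (0:ℝ)] with α hα
    exact (sandwich (b α) (q α) (hb α hα).1 (hb α hα).2 (hq α hα)).2
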